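/- Let k be a field, A a k-algebra, V a simple A-module that is finite-dimensional over k, and e ∈ A an idempotent such that the subspace e·V of V has k-dimension exactly 1. Then every A-module endomorphism of V is multiplication by a scalar in k. -/

import Mathlib

/-- Schur-type lemma: if `V` is a simple `A`-module, finite-dimensional over `k`,
and `e ∈ A` is an idempotent with `dim_k (e·V) = 1`, then every `A`-module
endomorphism of `V` is multiplication by a scalar in `k`. -/
theorem schur_one_dimensional_vertex {k A V : Type*} [Field k] [Ring A] [Algebra k A]
    [AddCommGroup V] [Module k V] [Module A V] [IsScalarTower k A V]
    [SMulCommClass A k V] [IsSimpleModule A V] [FiniteDimensional k V]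
    (e : A) (he : e * e = e)
    (hdim : Module.finrank k (LinearMap.range (DistribMulAction.toLinearMap k V e)) = 1) :
    ∀ φ : V →ₗ[A] V, ∃ c : k, ∀ v : V, φ v = c • v := by
  intro φ
  set W := LinearMap.range (DistribMulAction.toLinearMap k V e) with hW
  -- W is nonzero
  have hWne : W ≠ ⊥ := by
    intro h
    rw [h] at hdim
    simp at hdim
  obtain ⟨w, hwW, hw0⟩ := Submodule.exists_mem_ne_zero_of_ne_bot hWne
  -- W = span {w}
  have hspan : W = Submodule.span k {w} := by
    refine (Submodule.eq_of_le_of_finrank_eq ?_ ?_).symm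
    · rwa [Submodule.span_le, Set.singleton_subset_iff]
    · rw [finrank_span_singleton hw0, hdim]
  -- φ w ∈ W
  obtain ⟨u, hu⟩ := hwW
  have hφw : φ w ∈ W := by
    refine ⟨φ u, ?_⟩
    change e • u = w at hu
    change e • φ u = φ w
    rw [← hu, map_smul]
  rw [hspan, Submodule.mem_span_singleton] at hφw
  obtain ⟨c, hc⟩ := hφw
  refine ⟨c, ?_⟩
  -- ψ = φ - c • id is A-linear, kills w ≠ 0, so ψ = 0 by simplicity
  set ψ : V →ₗ[A] V := φ - c • LinearMap.id with hψ
  have hker : LinearMap.ker ψ ≠ ⊥ := by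
    intro h
    have : w ∈ LinearMap.ker ψ := by
      simp [hψ, LinearMap.mem_ker, hc.symm]
    rw [h, Submodule.mem_bot] at this
    exact hw0 this
  have htop : LinearMap.ker ψ = ⊤ :=
    (eq_bot_or_eq_top (LinearMap.ker ψ)).resolve_left hker
  intro v
  have : ψ v = 0 := by
    have : v ∈ LinearMap.ker ψ := htop ▸ Submodule.mem_top
    exact this
  simpa [hψ, sub_eq_zero] using this
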